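/- Let G = (V, E) be a finite directed graph, let S ⊆ V with |S| = m ≥ 2, and suppose G|_S is a unicycle containing the edge e. Define the rate tuple R by R_i = 1/(m−1) for i ∈ S and R_i = 0 otherwise. Then R satisfies every MAIS constraint of G (i.e., Σ_{j∈T} R_j ≤ 1 for all T ⊆ V with G|_T acyclic), but R violates some MAIS constraint of G − e (namely Σ_{j∈S} R_j = m/(m−1) > 1 while (G − e)|_S is acyclic). -/

import Mathlib

variable {V : Type*}

/-- A directed cycle given as a nonempty list of distinct vertices
`v₁, …, v_k` with edges `v₁→v₂, …, v_{k-1}→v_k, v_k→v₁`. -/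
def IsCycle (E : V → V → Prop) : List V → Prop
  | [] => False
  | v :: l => (v :: l).Nodup ∧ List.Chain E v (l ++ [v])

/-- A directed graph is acyclic if it contains no directed cycle. -/
def Acyclic (E : V → V → Prop) : Prop := ∀ l : List V, ¬ IsCycle E l

/-- The subgraph of `E` induced by the vertex set `S`. -/
def Induced (E : V → V → Prop) (S : Set V) : V → V → Prop :=
  fun a b => a ∈ S ∧ b ∈ S ∧ E a b

/-- The graph obtained from `E` by deleting the edge `e`. -/
def Delete (E : V → V → Prop) (e : V × V) : V → V → Prop :=
  fun a b => E a b ∧ (a, b) ≠ e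

/-- `(a, b)` is an edge of the directed cycle determined by the list `l`
(consecutive elements, wrapping around). -/
def CycleEdge (l : List V) (a b : V) : Prop :=
  ∃ i : Fin l.length, l.get i = a ∧ l.get ⟨(↑i + 1) % l.length, Nat.mod_lt _ i.pos⟩ = b

/-- `G|_S` is a unicycle: the edge set of the induced subgraph on `S` is exactly
the edge set of a Hamiltonian directed cycle of `G|_S`. -/
def IsUnicycle (E : V → V → Prop) (S : Set V) : Prop :=
  ∃ l : List V, l ≠ [] ∧ l.Nodup ∧ (∀ v, v ∈ l ↔ v ∈ S) ∧
    ∀ a b, Induced E S a b ↔ CycleEdge l a b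

-- helper: wrap-around get
lemma get_append_single (v : V) (t : List V) (i : ℕ) (hi : i < t.length + 1) :
    (t ++ [v]).get ⟨i, by simp; omega⟩ =
      (v :: t).get ⟨(i + 1) % (t.length + 1), Nat.mod_lt _ (Nat.succ_pos _)⟩ := by
  rcases Nat.lt_or_ge i t.length with h' | h'
  · have h1 : (i + 1) % (t.length + 1) = i + 1 := Nat.mod_eq_of_lt (by omega)
    simp only [List.get_eq_getElem]
    rw [List.getElem_append_left h']
    simp only [h1, List.getElem_cons_succ]
  · have h2 : i = t.length := by omega
    subst h2
    have h1 : (t.length + 1) % (t.length + 1) = 0 := Nat.mod_self _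
    simp only [List.get_eq_getElem]
    rw [List.getElem_concat_length rfl]
    simp only [h1, List.getElem_cons_zero]

lemma chain_cycle {R : V → V → Prop} (v : V) (t : List V)
    (h : ∀ i : Fin (v :: t).length,
      R ((v :: t).get i) ((v :: t).get ⟨(↑i + 1) % (v :: t).length, Nat.mod_lt _ i.pos⟩)) :
    List.Chain R v (t ++ [v]) := by
  suffices H : (∀ h : 0 < (t ++ [v]).length, R v ((t ++ [v]).get ⟨0, h⟩)) ∧
      ∀ (i : ℕ) (h : i < (t ++ [v]).length - 1),
        R ((t ++ [v]).get ⟨i, by omega⟩) ((t ++ [v]).get ⟨i + 1, by omega⟩) by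
    change List.IsChain R (v :: (t ++ [v]))
    rw [List.isChain_iff_getElem]
    intro i hi
    rcases i with _ | i
    · exact H.1 (by simp)
    · exact H.2 i (by simp at hi ⊢; omega)
  constructor
  · intro h0
    have h1 := h ⟨0, Nat.succ_pos _⟩
    rw [get_append_single v t 0 (Nat.succ_pos _)]
    exact h1
  · intro i hi
    have hi' : i < t.length := by simpa using hi
    have h1 := h ⟨i + 1, by simp; omega⟩
    have e1 : (t ++ [v]).get ⟨i, by simp; omega⟩ = (v :: t).get ⟨i + 1, by simp; omega⟩ := by
      simp only [List.get_eq_getElem]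
      rw [List.getElem_append_left hi', List.getElem_cons_succ]
    have e2 := get_append_single v t (i + 1) (by omega)
    rw [e1, e2]
    exact h1

lemma chain_lt_last {f : V → ℕ} :
    ∀ (t : List V) (a v : V), List.Chain (fun x y => f x < f y) a (t ++ [v]) → f a < f v := by
  intro t
  induction t with
  | nil => intro a v h; rw [List.nil_append] at h; change List.IsChain _ [a, v] at h; rw [List.chain_cons] at h; exact h.1
  | cons w t ih =>
    intro a v h
    rw [List.cons_append] at h
    change List.IsChain _ (a :: w :: (t ++ [v])) at h
    rw [List.chain_cons] at h
    exact h.1.trans (ih w v h.2)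

lemma keymod (k i j : ℕ) (hi : i < k) (hj : j < k) (hij : i ≠ j) :
    (i + (k - 1 - j)) % k < ((i + 1) % k + (k - 1 - j)) % k := by
  set d := k - 1 - j with hd
  have hjd : j + d = k - 1 := by omega
  by_cases hik : i + 1 < k
  · rw [Nat.mod_eq_of_lt hik]
    by_cases h2 : i + d < k
    · have h3 : i + d < k - 1 := by omega
      rw [Nat.mod_eq_of_lt h2, Nat.mod_eq_of_lt (by omega)]
      omega
    · have e1 : (i + d) % k = i + d - k := by
        rw [Nat.mod_eq_sub_mod (by omega), Nat.mod_eq_of_lt (by omega)]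
      have e2 : (i + 1 + d) % k = i + 1 + d - k := by
        rw [Nat.mod_eq_sub_mod (by omega), Nat.mod_eq_of_lt (by omega)]
      omega
  · have hik' : i + 1 = k := by omega
    have hd1 : 1 ≤ d := by omega
    have e0 : (i + 1) % k = 0 := by rw [hik', Nat.mod_self]
    have e1 : (i + d) % k = d - 1 := by
      rw [Nat.mod_eq_sub_mod (by omega), Nat.mod_eq_of_lt (by omega)]
      omega
    rw [e0, e1, Nat.zero_add, Nat.mod_eq_of_lt (by omega)]
    omega

theorem stmt10 [DecidableEq V] (E : V → V → Prop) (S : Finset V) (e : V × V)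
    (m : ℕ) (hm : S.card = m) (hm2 : 2 ≤ m)
    (hU : IsUnicycle E ↑S) (he : Induced E ↑S e.1 e.2)
    (R : V → ℝ) (hR : ∀ i, R i = if i ∈ S then 1 / ((m : ℝ) - 1) else 0) :
    (∀ T : Finset V, Acyclic (Induced E ↑T) → ∑ j ∈ T, R j ≤ 1) ∧
      Acyclic (Induced (Delete E e) ↑S) ∧
      (∑ j ∈ S, R j = (m : ℝ) / ((m : ℝ) - 1)) ∧ (1 : ℝ) < (m : ℝ) / ((m : ℝ) - 1) := by
  obtain ⟨l, hl, hnd, hmem, hedge⟩ := hU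
  have hmr : (2 : ℝ) ≤ (m : ℝ) := by exact_mod_cast hm2
  have hc : (0 : ℝ) < (m : ℝ) - 1 := by linarith
  refine ⟨?_, ?_, ?_, ?_⟩
  · -- MAIS constraints for G
    intro T hT
    have hST : ¬ (↑S : Set V) ⊆ ↑T := by
      intro hsub
      obtain ⟨v, t, rfl⟩ := List.exists_cons_of_ne_nil hl
      apply hT (v :: t)
      refine ⟨hnd, chain_cycle v t ?_⟩
      intro i
      have hcy : CycleEdge (v :: t) ((v :: t).get i)
          ((v :: t).get ⟨(↑i + 1) % (v :: t).length, Nat.mod_lt _ i.pos⟩) := ⟨i, rfl, rfl⟩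
      have h1 := (hedge _ _).mpr hcy
      exact ⟨hsub h1.1, hsub h1.2.1, h1.2.2⟩
    have hcard : (T ∩ S).card ≤ m - 1 := by
      by_contra hcc
      push_neg at hcc
      have hle : S.card ≤ (T ∩ S).card := by omega
      have heq : T ∩ S = S := Finset.eq_of_subset_of_card_le Finset.inter_subset_right hle
      apply hST
      intro x hx
      have hx' : x ∈ S := hx
      have : x ∈ T ∩ S := by rw [heq]; exact hx'
      exact Finset.mem_coe.mpr (Finset.mem_of_mem_inter_left this)
    have hsum : ∑ j ∈ T, R j = ((T ∩ S).card : ℝ) * (1 / ((m : ℝ) - 1)) := by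
      rw [Finset.sum_congr rfl (fun j _ => hR j), Finset.sum_ite_mem, Finset.sum_const,
        nsmul_eq_mul]
    rw [hsum]
    have hcr : ((T ∩ S).card : ℝ) ≤ (m : ℝ) - 1 := by
      have : ((T ∩ S).card : ℝ) ≤ ((m - 1 : ℕ) : ℝ) := by exact_mod_cast hcard
      have hcast : ((m - 1 : ℕ) : ℝ) = (m : ℝ) - 1 := by
        have : 1 ≤ m := by omega
        push_cast [this]
        ring
      linarith [hcast ▸ this]
    calc ((T ∩ S).card : ℝ) * (1 / ((m : ℝ) - 1))
        ≤ ((m : ℝ) - 1) * (1 / ((m : ℝ) - 1)) := by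
          apply mul_le_mul_of_nonneg_right hcr
          positivity
      _ = 1 := by field_simp
  · -- Acyclicity of G - e restricted to S
    obtain ⟨i0, hi0a, hi0b⟩ := (hedge _ _).mp he
    set f : V → ℕ := fun v => (l.idxOf v + (l.length - 1 - ↑i0)) % l.length with hf
    have hkey : ∀ a b, Induced (Delete E e) ↑S a b → f a < f b := by
      intro a b hab
      have h1 : Induced E ↑S a b := ⟨hab.1, hab.2.1, hab.2.2.1⟩
      have hne : (a, b) ≠ e := hab.2.2.2
      obtain ⟨i, hia, hib⟩ := (hedge a b).mp h1
      have hia' : l.idxOf a = ↑i := by rw [← hia]; exact List.get_idxOf hnd i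
      have hib' : l.idxOf b = (↑i + 1) % l.length := by
        rw [← hib]; exact List.get_idxOf hnd _
      have hii : (↑i : ℕ) ≠ ↑i0 := by
        intro hcontra
        apply hne
        have ha : a = e.1 := by
          rw [← hia, ← hi0a]; congr 1; exact Fin.ext hcontra
        have hb : b = e.2 := by
          rw [← hib, ← hi0b]; congr 1; simp [hcontra]
        rw [ha, hb]
      rw [hf]
      simp only
      rw [hia', hib']
      exact keymod l.length ↑i ↑i0 i.isLt i0.isLt hii
    intro l' hcyc
    match l' with
    | [] => exact hcyc
    | v :: t =>
      obtain ⟨_, hchain⟩ := hcyc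
      have := chain_lt_last t v v (List.IsChain.imp (fun a b hab => hkey a b hab) hchain)
      omega
  · rw [Finset.sum_congr rfl (fun j hj => by rw [hR, if_pos hj]), Finset.sum_const, hm,
      nsmul_eq_mul, mul_one_div]
  · rw [one_lt_div hc]
    linarith
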